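/- Suppose each f_i is convex and L_i-smooth. Then for all x, w ∈ ℝ^d, (1/n)∑_{i=1}^n (1/L_i)‖∇f_i(x) − ∇f_i(w)‖² ≤ 2(F(w) − F(x) − ⟨∇F(x), w − x⟩). -/

import Mathlib

open MeasureTheory Finset
open scoped RealInnerProductSpace BigOperators

abbrev Euc (d : ℕ) := EuclideanSpace ℝ (Fin d)

/-- The finite-sum objective `F(x) = (1/n) ∑ f i x`. -/
noncomputable def avgF {d : ℕ} (n : ℕ) (f : Fin n → Euc d → ℝ) (x : Euc d) : ℝ :=
  (1 / (n : ℝ)) * ∑ i, f i x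

/-- The gradient of the finite-sum objective, `∇F(x) = (1/n) ∑ ∇f i x`. -/
noncomputable def avgG {d : ℕ} (n : ℕ) (f' : Fin n → Euc d → Euc d) (x : Euc d) : Euc d :=
  (1 / (n : ℝ)) • ∑ i, f' i x

/-- The effective sampling variance `V_e(q; x, w)`. -/
noncomputable def Ve {d : ℕ} (n : ℕ) (f' : Fin n → Euc d → Euc d)
    (q : Fin n → ℝ) (x w : Euc d) : ℝ :=
  (1 / (n : ℝ) ^ 2) * ∑ i, (1 / q i) * ‖f' i x - f' i w‖ ^ 2

/-- The average smoothness constant `L̄ = (1/n) ∑ L i`. -/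
noncomputable def Lbar (n : ℕ) (L : Fin n → ℝ) : ℝ := (1 / (n : ℝ)) * ∑ i, L i

/-- The importance sampling distribution `p^IS_i = L i / (n L̄)`. -/
noncomputable def pIS (n : ℕ) (L : Fin n → ℝ) (i : Fin n) : ℝ :=
  L i / ((n : ℝ) * Lbar n L)

/-- `D(w) = (1/n) ∑ (1 / L i) ‖∇f i w - ∇f i x*‖²`. -/
noncomputable def Dfun {d : ℕ} (n : ℕ) (f' : Fin n → Euc d → Euc d) (L : Fin n → ℝ)
    (xstar w : Euc d) : ℝ :=
  (1 / (n : ℝ)) * ∑ i, (1 / L i) * ‖f' i w - f' i xstar‖ ^ 2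

lemma descent {d : ℕ} (f : Euc d → ℝ) (g : Euc d → Euc d) (L : ℝ) (hL : 0 < L)
    (hg : ∀ x, HasGradientAt f (g x) x) (hlip : ∀ a b, ‖g a - g b‖ ≤ L * ‖a - b‖)
    (x y : Euc d) : f y ≤ f x + ⟪g x, y - x⟫ + L / 2 * ‖y - x‖ ^ 2 := by
  set v := y - x with hv
  have hgcont : Continuous g := by
    have : LipschitzWith (Real.toNNReal L) g := by
      intro a b
      rw [edist_dist, edist_dist]
      simp only [dist_eq_norm]
      rw [← ENNReal.ofReal_coe_nnreal]
      rw [← ENNReal.ofReal_mul (by positivity)]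
      apply ENNReal.ofReal_le_ofReal
      simpa [Real.coe_toNNReal L hL.le] using hlip a b
    exact this.continuous
  have hline : ∀ t : ℝ, HasDerivAt (fun t : ℝ => x + t • v) v t := by
    intro t
    simpa using ((hasDerivAt_id t).smul_const v).const_add x
  have hphi : ∀ t : ℝ, HasDerivAt (fun t : ℝ => f (x + t • v)) ⟪g (x + t • v), v⟫ t := by
    intro t
    have h1 := (hasGradientAt_iff_hasFDerivAt.1 (hg (x + t • v))).comp_hasDerivAt t (hline t)
    simp at h1
    exact h1
  have hcont : Continuous fun t : ℝ => ⟪g (x + t • v), v⟫ := by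
    apply Continuous.inner (hgcont.comp (by continuity)) continuous_const
  have hint : f y - f x = ∫ t in (0:ℝ)..1, ⟪g (x + t • v), v⟫ := by
    rw [intervalIntegral.integral_eq_sub_of_hasDerivAt (fun t _ => hphi t)
      (hcont.intervalIntegrable 0 1)]
    simp [hv]
  have hbound : (∫ t in (0:ℝ)..1, ⟪g (x + t • v), v⟫) ≤
      ∫ t in (0:ℝ)..1, (⟪g x, v⟫ + L * t * ‖v‖ ^ 2) := by
    apply intervalIntegral.integral_mono_on zero_le_one
      (hcont.intervalIntegrable 0 1)
      ((by continuity : Continuous fun t : ℝ => ⟪g x, v⟫ + L * t * ‖v‖ ^ 2).intervalIntegrable 0 1)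
    intro t ht
    have h1 : ⟪g (x + t • v) - g x, v⟫ ≤ ‖g (x + t • v) - g x‖ * ‖v‖ :=
      real_inner_le_norm _ _
    have h2 : ‖g (x + t • v) - g x‖ ≤ L * (t * ‖v‖) := by
      have := hlip (x + t • v) x
      simpa [norm_smul, abs_of_nonneg ht.1, mul_assoc] using this
    have h3 : ⟪g (x + t • v), v⟫ = ⟪g x, v⟫ + ⟪g (x + t • v) - g x, v⟫ := by
      rw [inner_sub_left]; ring
    rw [h3]
    have : ⟪g (x + t • v) - g x, v⟫ ≤ L * t * ‖v‖ ^ 2 := by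
      calc _ ≤ ‖g (x + t • v) - g x‖ * ‖v‖ := h1
        _ ≤ L * (t * ‖v‖) * ‖v‖ := by
            apply mul_le_mul_of_nonneg_right h2 (norm_nonneg _)
        _ = L * t * ‖v‖ ^ 2 := by ring
    linarith
  have hval : (∫ t in (0:ℝ)..1, (⟪g x, v⟫ + L * t * ‖v‖ ^ 2)) = ⟪g x, v⟫ + L / 2 * ‖v‖ ^ 2 := by
    have heq : ∀ t : ℝ, ⟪g x, v⟫ + L * t * ‖v‖ ^ 2 = ⟪g x, v⟫ + (L * ‖v‖ ^ 2) * t := by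
      intro t; ring
    simp_rw [heq]
    have h2 := intervalIntegral.integral_add (a := (0:ℝ)) (b := 1) (μ := volume)
      (f := fun _ : ℝ => ⟪g x, v⟫) (g := fun t : ℝ => (L * ‖v‖ ^ 2) * t)
      intervalIntegrable_const ((continuous_const.mul continuous_id).intervalIntegrable 0 1)
    rw [h2, intervalIntegral.integral_const_mul, integral_id]
    simp
    ring
  linarith [hint ▸ hbound.trans_eq hval]

lemma cocoercive {d : ℕ} (f : Euc d → ℝ) (g : Euc d → Euc d) (L : ℝ) (hL : 0 < L)
    (hg : ∀ x, HasGradientAt f (g x) x) (hlip : ∀ a b, ‖g a - g b‖ ≤ L * ‖a - b‖)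
    (hconv : ∀ x y, f x + ⟪g x, y - x⟫ ≤ f y) (x w : Euc d) :
    (1 / L) * ‖g x - g w‖ ^ 2 ≤ 2 * (f w - f x - ⟪g x, w - x⟫) := by
  set h : Euc d → ℝ := fun y => f y - ⟪g x, y⟫ with hh
  set G : Euc d → Euc d := fun y => g y - g x with hG
  have hgh : ∀ y, HasGradientAt h (G y) y := by
    intro y
    have h1 : HasFDerivAt h ((InnerProductSpace.toDual ℝ (Euc d)) (g y) -
        (InnerProductSpace.toDual ℝ (Euc d)) (g x)) y := by
      exact (hasGradientAt_iff_hasFDerivAt.1 (hg y)).sub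
        ((InnerProductSpace.toDual ℝ (Euc d) (g x)).hasFDerivAt)
    rw [hasGradientAt_iff_hasFDerivAt]
    simpa [hG, map_sub] using h1
  have hGlip : ∀ a b, ‖G a - G b‖ ≤ L * ‖a - b‖ := by
    intro a b; simpa [hG, sub_sub_sub_cancel_right] using hlip a b
  have hxy : h x ≤ h (w - (1 / L) • G w) := by
    have := hconv x (w - (1 / L) • G w)
    have heq : h (w - (1 / L) • G w) - h x =
        f (w - (1 / L) • G w) - f x - ⟪g x, (w - (1 / L) • G w) - x⟫ := by
      simp only [hh]
      rw [show ⟪g x, (w - (1 / L) • G w) - x⟫ = ⟪g x, w - (1 / L) • G w⟫ - ⟪g x, x⟫ by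
        rw [inner_sub_right]]
      ring
    linarith
  have hdesc := descent h G L hL hgh hGlip w (w - (1 / L) • G w)
  have hstep : (w - (1 / L) • G w) - w = -((1 / L) • G w) := by abel
  rw [hstep] at hdesc
  have hn : ‖-((1 / L) • G w)‖ ^ 2 = (1 / L) ^ 2 * ‖G w‖ ^ 2 := by
    rw [norm_neg, norm_smul]
    simp [abs_of_pos (by positivity : (0:ℝ) < 1 / L), mul_pow]
  have hi : ⟪G w, -((1 / L) • G w)⟫ = -(1 / L) * ‖G w‖ ^ 2 := by
    rw [inner_neg_right, real_inner_smul_right, real_inner_self_eq_norm_sq]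
    ring
  rw [hn, hi] at hdesc
  have key : h x + (1 / (2 * L)) * ‖G w‖ ^ 2 ≤ h w := by
    have h2 : L / 2 * ((1 / L) ^ 2 * ‖G w‖ ^ 2) = (1 / (2 * L)) * ‖G w‖ ^ 2 := by
      field_simp
    have h3 : (1 / L) * ‖G w‖ ^ 2 = 2 * (1 / (2 * L) * ‖G w‖ ^ 2) := by
      field_simp
    rw [h2] at hdesc
    linarith [h3]
  have hfinal : h w - h x = f w - f x - ⟪g x, w - x⟫ := by
    simp only [hh]
    rw [show ⟪g x, w - x⟫ = ⟪g x, w⟫ - ⟪g x, x⟫ by rw [inner_sub_right]]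
    ring
  have hsym : ‖g x - g w‖ = ‖G w‖ := by rw [hG]; rw [← norm_neg]; congr 1; abel
  rw [hsym]
  have heq2 : (1 / L) * ‖G w‖ ^ 2 = 2 * ((1 / (2 * L)) * ‖G w‖ ^ 2) := by
    field_simp
  rw [heq2]
  clear_value h G
  linarith [key, hfinal]

theorem averaged_cocoercivity' (d n : ℕ) (hd : 0 < d) (hn : 0 < n)
    (f : Fin n → Euc d → ℝ) (f' : Fin n → Euc d → Euc d) (L : Fin n → ℝ)
    (hgrad : ∀ i x, HasGradientAt (f i) (f' i x) x)
    (hconv : ∀ i x y, f i x + ⟪f' i x, y - x⟫ ≤ f i y)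
    (hLpos : ∀ i, 0 < L i)
    (hsmooth : ∀ i x y, ‖f' i x - f' i y‖ ≤ L i * ‖x - y‖)
    (x w : Euc d) :
    (1 / (n : ℝ)) * ∑ i, (1 / L i) * ‖f' i x - f' i w‖ ^ 2 ≤
      2 * ((1 / (n : ℝ)) * ∑ i, f i w - (1 / (n : ℝ)) * ∑ i, f i x -
        ⟪(1 / (n : ℝ)) • ∑ i, f' i x, w - x⟫) := by
  have hterm : ∀ i, (1 / L i) * ‖f' i x - f' i w‖ ^ 2 ≤
      2 * (f i w - f i x - ⟪f' i x, w - x⟫) := fun i =>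
    cocoercive (f i) (f' i) (L i) (hLpos i) (hgrad i) (hsmooth i) (hconv i) x w
  have hin : ⟪(1 / (n : ℝ)) • ∑ i, f' i x, w - x⟫ =
      (1 / (n : ℝ)) * ∑ i, ⟪f' i x, w - x⟫ := by
    rw [real_inner_smul_left, sum_inner]
  rw [hin]
  have hsum : ∑ i, (1 / L i) * ‖f' i x - f' i w‖ ^ 2 ≤
      ∑ i, 2 * (f i w - f i x - ⟪f' i x, w - x⟫) :=
    Finset.sum_le_sum fun i _ => hterm i
  have hnn : (0:ℝ) ≤ 1 / (n : ℝ) := by positivity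
  calc (1 / (n : ℝ)) * ∑ i, (1 / L i) * ‖f' i x - f' i w‖ ^ 2
      ≤ (1 / (n : ℝ)) * ∑ i, 2 * (f i w - f i x - ⟪f' i x, w - x⟫) :=
        mul_le_mul_of_nonneg_left hsum hnn
    _ = 2 * ((1 / (n : ℝ)) * ∑ i, f i w - (1 / (n : ℝ)) * ∑ i, f i x -
        (1 / (n : ℝ)) * ∑ i, ⟪f' i x, w - x⟫) := by
        rw [← Finset.mul_sum, Finset.sum_sub_distrib, Finset.sum_sub_distrib]
        ring


/-- co-coercivity averaged over the components. -/
theorem averaged_cocoercivity (d n : ℕ) (hd : 0 < d) (hn : 0 < n)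
    (f : Fin n → Euc d → ℝ) (f' : Fin n → Euc d → Euc d) (L : Fin n → ℝ)
    (hgrad : ∀ i x, HasGradientAt (f i) (f' i x) x)
    (hconv : ∀ i x y, f i x + ⟪f' i x, y - x⟫ ≤ f i y)
    (hLpos : ∀ i, 0 < L i)
    (hsmooth : ∀ i x y, ‖f' i x - f' i y‖ ≤ L i * ‖x - y‖)
    (x w : Euc d) :
    (1 / (n : ℝ)) * ∑ i, (1 / L i) * ‖f' i x - f' i w‖ ^ 2 ≤
      2 * (avgF n f w - avgF n f x - ⟪avgG n f' x, w - x⟫) := by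
  simp only [avgF, avgG]
  exact averaged_cocoercivity' d n hd hn f f' L hgrad hconv hLpos hsmooth x w
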